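/- The SPO loss equals the limit of the dual bound: ℓ_SPO(ĉ, c) = lim_{α → +∞} { ξ_S(c − αĉ) + α z*(ĉ) } − z*(c). -/

import Mathlib

open MeasureTheory Set

noncomputable section

/-- Dot product on `Fin d → ℝ`. -/
def dotp {d : ℕ} (c w : Fin d → ℝ) : ℝ := ∑ i, c i * w i

lemma cont_dotp {d : ℕ} (c : Fin d → ℝ) : Continuous fun w : Fin d → ℝ => dotp c w := by
  unfold dotp
  exact continuous_finset_sum _ fun i _ => continuous_const.mul (continuous_apply i)

lemma dotp_sub_smul {d : ℕ} (c chat w : Fin d → ℝ) (α : ℝ) :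
    dotp (c - α • chat) w = dotp c w - α * dotp chat w := by
  unfold dotp
  simp [sub_mul, Finset.sum_sub_distrib, Finset.mul_sum, mul_assoc]

/-- Optimal value `z*(c) = min_{w ∈ S} cᵀw`. -/
def zS {d : ℕ} (S : Set (Fin d → ℝ)) (c : Fin d → ℝ) : ℝ := sInf ((fun w => dotp c w) '' S)

/-- Support function `ξ_S(c) = max_{w ∈ S} cᵀw`. -/
def xiS {d : ℕ} (S : Set (Fin d → ℝ)) (c : Fin d → ℝ) : ℝ := sSup ((fun w => dotp c w) '' S)

/-- Optimal solution set `W*(c) = argmin_{w ∈ S} cᵀw`. -/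
def WS {d : ℕ} (S : Set (Fin d → ℝ)) (c : Fin d → ℝ) : Set (Fin d → ℝ) :=
  {w | w ∈ S ∧ ∀ u ∈ S, dotp c w ≤ dotp c u}

/-- SPO loss `ℓ_SPO(ĉ, c) = max_{w ∈ W*(ĉ)} cᵀw − z*(c)`. -/
def lSPO {d : ℕ} (S : Set (Fin d → ℝ)) (chat c : Fin d → ℝ) : ℝ :=
  sSup ((fun w => dotp c w) '' WS S chat) - zS S c

/-- SPO+ loss `ℓ_SPO+(ĉ, c) = ξ_S(c − 2ĉ) + 2ĉᵀw*(c) − z*(c)` given a selection `wstar`. -/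
def lSPOp {d : ℕ} (S : Set (Fin d → ℝ)) (wstar : (Fin d → ℝ) → (Fin d → ℝ))
    (chat c : Fin d → ℝ) : ℝ :=
  xiS S (c - (2 : ℝ) • chat) + 2 * dotp chat (wstar c) - zS S c

/-- the SPO loss equals the limit of the dual bound as `α → +∞`:
`ℓ_SPO(ĉ, c) = lim_{α → ∞} { ξ_S(c − αĉ) + α z*(ĉ) } − z*(c)`. -/
theorem spo_loss_eq_limit_dual {d : ℕ} (S : Set (Fin d → ℝ))
    (hS : S.Nonempty) (hSc : IsCompact S) (hScv : Convex ℝ S)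
    (chat c : Fin d → ℝ) :
    Filter.Tendsto (fun α : ℝ => xiS S (c - α • chat) + α * zS S chat - zS S c)
      Filter.atTop (nhds (lSPO S chat c)) := by
  unfold lSPO
  classical
  set z := zS S chat with hz
  have hcc : Continuous fun w : Fin d → ℝ => dotp c w := cont_dotp c
  have hch : Continuous fun w : Fin d → ℝ => dotp chat w := cont_dotp chat
  have hbddS : BddAbove ((fun w => dotp c w) '' S) := (hSc.image hcc).bddAbove
  have hbddSb : BddBelow ((fun w => dotp chat w) '' S) := (hSc.image hch).bddBelow
  have hzle : ∀ w ∈ S, z ≤ dotp chat w := fun w hw => csInf_le hbddSb ⟨w, hw, rfl⟩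
  have hWS_eq : WS S chat = S ∩ (fun w => dotp chat w) ⁻¹' Iic z := by
    ext w
    constructor
    · rintro ⟨hw, hmin⟩
      exact ⟨hw, le_csInf (hS.image _) (by rintro b ⟨u, hu, rfl⟩; exact hmin u hu)⟩
    · rintro ⟨hw, hle⟩
      exact ⟨hw, fun u hu => le_trans hle (hzle u hu)⟩
  have hWSc : IsCompact (WS S chat) := by
    rw [hWS_eq]; exact hSc.inter_right (isClosed_Iic.preimage hch)
  obtain ⟨w0, hw0S, hw0min⟩ := hSc.exists_isMinOn hS hch.continuousOn
  have hw0 : w0 ∈ WS S chat := ⟨hw0S, fun u hu => hw0min hu⟩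
  have hWSne : (WS S chat).Nonempty := ⟨w0, hw0⟩
  have hWz : ∀ w ∈ WS S chat, dotp chat w = z := by
    intro w hw
    have hw' := hw
    rw [hWS_eq] at hw'
    exact le_antisymm hw'.2 (hzle w hw'.1)
  set L := sSup ((fun w => dotp c w) '' WS S chat) with hL
  have hbddW : BddAbove ((fun w => dotp c w) '' WS S chat) :=
    hbddS.mono (image_mono (fun w hw => hw.1))
  obtain ⟨w2, hw2, hw2max⟩ := hWSc.exists_isMaxOn hWSne hcc.continuousOn
  have hLeq : L = dotp c w2 :=
    le_antisymm (csSup_le (hWSne.image _) (by rintro b ⟨u, hu, rfl⟩; exact hw2max hu))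
      (le_csSup hbddW ⟨w2, hw2, rfl⟩)
  have hlow : ∀ α : ℝ, L ≤ xiS S (c - α • chat) + α * z := by
    intro α
    have h1 : dotp (c - α • chat) w2 ≤ xiS S (c - α • chat) :=
      le_csSup ((hSc.image (cont_dotp _)).bddAbove) ⟨w2, hw2.1, rfl⟩
    have h2 : dotp (c - α • chat) w2 = dotp c w2 - α * z := by
      rw [dotp_sub_smul, hWz w2 hw2]
    rw [hLeq]
    linarith
  set M := sSup ((fun w => dotp c w) '' S) with hM
  have hMle : ∀ w ∈ S, dotp c w ≤ M := fun w hw => le_csSup hbddS ⟨w, hw, rfl⟩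
  have claim : ∀ ε > (0:ℝ), ∃ δ > (0:ℝ), ∀ w ∈ S, dotp chat w ≤ z + δ → dotp c w ≤ L + ε := by
    intro ε hε
    by_cases hT : (S ∩ (fun w => dotp c w) ⁻¹' Ici (L + ε)).Nonempty
    · have hTc : IsCompact (S ∩ (fun w => dotp c w) ⁻¹' Ici (L + ε)) :=
        hSc.inter_right (isClosed_Ici.preimage hcc)
      obtain ⟨w1, hw1, hw1min⟩ := hTc.exists_isMinOn hT hch.continuousOn
      have hmz : z < dotp chat w1 := by
        rcases lt_or_eq_of_le (hzle w1 hw1.1) with h | h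
        · exact h
        · exfalso
          have hw1W : w1 ∈ WS S chat := by
            rw [hWS_eq]; exact ⟨hw1.1, le_of_eq h.symm⟩
          have h1 : dotp c w1 ≤ L := le_csSup hbddW ⟨w1, hw1W, rfl⟩
          have h2 : L + ε ≤ dotp c w1 := hw1.2
          linarith
      refine ⟨(dotp chat w1 - z)/2, by linarith, fun w hw hwle => ?_⟩
      by_contra hcon
      push_neg at hcon
      have hwT : w ∈ S ∩ (fun w => dotp c w) ⁻¹' Ici (L + ε) := ⟨hw, le_of_lt hcon⟩
      have h7 : dotp chat w1 ≤ dotp chat w := hw1min hwT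
      linarith
    · refine ⟨1, one_pos, fun w hw _ => ?_⟩
      by_contra hcon
      push_neg at hcon
      exact hT ⟨w, hw, le_of_lt hcon⟩
  have hF : Filter.Tendsto (fun α : ℝ => xiS S (c - α • chat) + α * z) Filter.atTop (nhds L) := by
    rw [Metric.tendsto_atTop]
    intro ε hε
    obtain ⟨δ, hδ, hδp⟩ := claim (ε/2) (by linarith)
    refine ⟨max 0 ((M - L)/δ), fun α hα => ?_⟩
    have hα0 : (0:ℝ) ≤ α := le_trans (le_max_left _ _) hα
    have hαδ : (M - L)/δ ≤ α := le_trans (le_max_right _ _) hα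
    have h2 : M - L ≤ α * δ := by
      rw [div_le_iff₀ hδ] at hαδ; linarith
    have hub : xiS S (c - α • chat) + α * z ≤ L + ε/2 := by
      have hx : xiS S (c - α • chat) ≤ L + ε/2 - α * z := by
        apply csSup_le (hS.image _)
        rintro b ⟨w, hw, rfl⟩
        show dotp (c - α • chat) w ≤ L + ε / 2 - α * z
        rw [dotp_sub_smul]
        by_cases hcase : dotp chat w ≤ z + δ
        · have h3 := hδp w hw hcase
          have h4 : α * z ≤ α * dotp chat w :=
            mul_le_mul_of_nonneg_left (hzle w hw) hα0
          linarith
        · push_neg at hcase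
          have h1 := hMle w hw
          have h5 : α * (z + δ) ≤ α * dotp chat w :=
            mul_le_mul_of_nonneg_left hcase.le hα0
          have h6 : α * (z + δ) = α * z + α * δ := by ring
          linarith
      linarith
    have hlb := hlow α
    rw [Real.dist_eq, abs_lt]
    constructor <;> linarith
  exact hF.sub_const (zS S c)
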